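/- Let λ_max ≥ λ₀ > λ > 0. Then ‖θ*_λ − θ*_{λ₀}‖₂² ≤ (m/2)·[ g((λ/λ₀)·θ*_{λ₀}) − g(θ*_{λ₀}) + (1 − λ/λ₀)·⟨∇g(θ*_{λ₀}), θ*_{λ₀}⟩ ], where ∇g(θ) is the gradient of g, given componentwise by [∇g(θ)]_i = (1/m) log(θ_i/(1 − θ_i)). -/

import Mathlib

open Real Set Filter


/-- The dual objective `g(θ) = (1/m) Σ_i [θ_i log θ_i + (1−θ_i) log(1−θ_i)]`. -/
noncomputable def g (m : ℕ) (θ : Fin m → ℝ) : ℝ :=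
  (1 / (m : ℝ)) * ∑ i, (θ i * Real.log (θ i) + (1 - θ i) * Real.log (1 - θ i))

/-- The gradient of `g`, componentwise `(1/m) log(θ_i/(1−θ_i))`. -/
noncomputable def gradg (m : ℕ) (θ : Fin m → ℝ) : Fin m → ℝ :=
  fun i => (1 / (m : ℝ)) * Real.log (θ i / (1 - θ i))
/-- The dual feasible set `F_λ`: componentwise in `(0,1)`, `|⟨θ, x̄^j⟩| ≤ mλ` for all
columns `x̄^j = X j`, and `⟨θ, b⟩ = 0`. -/
def Feas (m p : ℕ) (X : Fin p → Fin m → ℝ) (b : Fin m → ℝ) (lam : ℝ) :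
    Set (Fin m → ℝ) :=
  {θ | (∀ i, 0 < θ i ∧ θ i < 1) ∧ (∀ j, |∑ i, θ i * X j i| ≤ (m : ℝ) * lam) ∧
    ∑ i, θ i * b i = 0}
open scoped Classical in
/-- `m⁺ = #{i : b_i = 1}`. -/
noncomputable def mPlus (m : ℕ) (b : Fin m → ℝ) : ℕ :=
  (Finset.univ.filter (fun i => b i = 1)).card

open scoped Classical in
/-- `m⁻ = #{i : b_i = −1}`. -/
noncomputable def mMinus (m : ℕ) (b : Fin m → ℝ) : ℕ :=
  (Finset.univ.filter (fun i => b i = -1)).card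

open scoped Classical in
/-- `θ_max`, with `(θ_max)_i = m⁻/m` if `b_i = 1` and `m⁺/m` if `b_i = −1`. -/
noncomputable def thetaMax (m : ℕ) (b : Fin m → ℝ) : Fin m → ℝ :=
  fun i => if b i = 1 then (mMinus m b : ℝ) / m else (mPlus m b : ℝ) / m

/-- `λ_max = (1/m) max_j |⟨θ_max, x̄^j⟩|`. -/
noncomputable def lamMax (m p : ℕ) (X : Fin p → Fin m → ℝ) (b : Fin m → ℝ) : ℝ :=
  (1 / (m : ℝ)) * ⨆ j : Fin p, |∑ i, thetaMax m b i * X j i|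


lemma hasDerivAt_ent' {y : ℝ} (h0 : 0 < y) (h1 : y < 1) :
    HasDerivAt (fun t => t * Real.log t + (1 - t) * Real.log (1 - t))
      (Real.log y - Real.log (1 - y)) y := by
  have h1' : (0:ℝ) < 1 - y := by linarith
  have A := Real.hasDerivAt_mul_log (ne_of_gt h0)
  have inner : HasDerivAt (fun t : ℝ => 1 - t) (-1) y := by
    simpa using (hasDerivAt_id y).const_sub 1
  have B := (Real.hasDerivAt_mul_log (ne_of_gt h1')).comp y inner
  have C := A.add B
  convert C using 1
  · rfl
  · rfl
  · rfl
  simp [Function.comp]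
  ring

lemma hasDerivAt_psi {t : ℝ} (h0 : 0 < t) (h1 : t < 1) :
    HasDerivAt (fun t => Real.log t - Real.log (1 - t) - 4 * t)
      (t⁻¹ + (1 - t)⁻¹ - 4) t := by
  have h1' : (0:ℝ) < 1 - t := by linarith
  have inner : HasDerivAt (fun s : ℝ => 1 - s) (-1) t := by
    simpa using (hasDerivAt_id t).const_sub 1
  have B := (Real.hasDerivAt_log (ne_of_gt h1')).comp t inner
  have A := Real.hasDerivAt_log (ne_of_gt h0)
  have C := (A.sub B).sub ((hasDerivAt_id t).const_mul 4)
  convert C using 1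
  · rfl
  · rfl
  · rfl
  simp [Function.comp]

lemma psi_mono : MonotoneOn (fun t => Real.log t - Real.log (1 - t) - 4 * t) (Ioo (0:ℝ) 1) := by
  apply monotoneOn_of_hasDerivWithinAt_nonneg (f' := fun t => t⁻¹ + (1 - t)⁻¹ - 4)
    (convex_Ioo 0 1)
  · intro t ht
    exact (hasDerivAt_psi ht.1 ht.2).continuousAt.continuousWithinAt
  · intro t ht
    rw [isOpen_Ioo.interior_eq] at ht
    exact (hasDerivAt_psi ht.1 ht.2).hasDerivWithinAt
  · intro t ht
    rw [isOpen_Ioo.interior_eq] at ht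
    obtain ⟨h0, h1⟩ := ht
    have h1' : (0:ℝ) < 1 - t := by linarith
    have key : t⁻¹ + (1 - t)⁻¹ - 4 = (1 - 2*t)^2 / (t * (1 - t)) := by
      field_simp
      ring
    rw [key]
    positivity

lemma pinsker {x y : ℝ} (hx0 : 0 < x) (hx1 : x < 1) (hy0 : 0 < y) (hy1 : y < 1) :
    x * Real.log x + (1 - x) * Real.log (1 - x)
      + (Real.log x - Real.log (1 - x)) * (y - x) + 2 * (y - x) ^ 2
    ≤ y * Real.log y + (1 - y) * Real.log (1 - y) := by
  set c := Real.log x - Real.log (1 - x) with hc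
  set φ : ℝ → ℝ := fun t => t * Real.log t + (1 - t) * Real.log (1 - t)
    - c * t - 2 * (t - x) ^ 2 with hφ
  set ψ : ℝ → ℝ := fun t => Real.log t - Real.log (1 - t) - 4 * t with hψ
  have hxmem : x ∈ Ioo (0:ℝ) 1 := ⟨hx0, hx1⟩
  have hder : ∀ t ∈ Ioo (0:ℝ) 1, HasDerivAt φ (ψ t - ψ x) t := by
    intro t ht
    have A := hasDerivAt_ent' ht.1 ht.2
    have B := ((hasDerivAt_id t).const_mul c)
    have C : HasDerivAt (fun s : ℝ => 2 * (s - x) ^ 2) (4 * (t - x)) t := by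
      have := (((hasDerivAt_id t).sub_const x).pow 2).const_mul 2
      convert this using 1
      · rfl
      · rfl
      · rfl
      simp [id]
      ring
    have D := (A.sub B).sub C
    convert D using 1
    · rfl
    · rfl
    · rfl
    simp [hψ, hc]
    ring
  have key : φ x ≤ φ y := by
    rcases le_total x y with hxy | hxy
    · have mono : MonotoneOn φ (Ico x 1) := by
        apply monotoneOn_of_hasDerivWithinAt_nonneg (f' := fun t => ψ t - ψ x) (convex_Ico x 1)
        · intro t ht
          exact (hder t ⟨lt_of_lt_of_le hx0 ht.1, ht.2⟩).continuousAt.continuousWithinAt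
        · intro t ht
          rw [interior_Ico] at ht
          exact (hder t ⟨lt_trans hx0 ht.1, ht.2⟩).hasDerivWithinAt
        · intro t ht
          rw [interior_Ico] at ht
          have := psi_mono hxmem ⟨lt_trans hx0 ht.1, ht.2⟩ (le_of_lt ht.1)
          linarith
      exact mono ⟨le_refl x, hx1⟩ ⟨hxy, hy1⟩ hxy
    · have anti : AntitoneOn φ (Ioc 0 x) := by
        apply antitoneOn_of_hasDerivWithinAt_nonpos (f' := fun t => ψ t - ψ x) (convex_Ioc 0 x)
        · intro t ht
          exact (hder t ⟨ht.1, lt_of_le_of_lt ht.2 hx1⟩).continuousAt.continuousWithinAt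
        · intro t ht
          rw [interior_Ioc] at ht
          exact (hder t ⟨ht.1, lt_trans ht.2 hx1⟩).hasDerivWithinAt
        · intro t ht
          rw [interior_Ioc] at ht
          have := psi_mono ⟨ht.1, lt_trans ht.2 hx1⟩ hxmem (le_of_lt ht.2)
          linarith
      exact anti ⟨hy0, hxy⟩ ⟨hx0, le_refl x⟩ hxy
  simp only [hφ] at key
  have hcc : c * (y - x) = c * y - c * x := by ring
  linarith [key]

lemma VI {m p : ℕ} {X : Fin p → Fin m → ℝ} {b : Fin m → ℝ} {lam lam₀ : ℝ}
    {θs θ₀ : Fin m → ℝ}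
    (hm : 1 ≤ m) (hlam : 0 < lam) (hll : lam < lam₀)
    (hsF : θs ∈ Feas m p X b lam) (h0F : θ₀ ∈ Feas m p X b lam₀)
    (h0min : ∀ θ ∈ Feas m p X b lam₀, g m θ₀ ≤ g m θ) :
    (lam / lam₀) * ∑ i, gradg m θ₀ i * θ₀ i ≤ ∑ i, gradg m θ₀ i * θs i := by
  obtain ⟨h0c, h0X, h0b⟩ := h0F
  obtain ⟨hsc, hsX, hsb⟩ := hsF
  have hlam₀ : 0 < lam₀ := lt_trans hlam hll
  set r : ℝ := lam / lam₀ with hr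
  have hr0 : 0 < r := div_pos hlam hlam₀
  have hr1 : r < 1 := (div_lt_one hlam₀).2 hll
  have hrl : r * lam₀ = lam := div_mul_cancel₀ _ (ne_of_gt hlam₀)
  haveI : Nonempty (Fin m) := ⟨⟨0, by omega⟩⟩
  have hm0 : (0:ℝ) < m := by positivity
  set d : Fin m → ℝ := fun i => θs i - r * θ₀ i with hd
  set f : ℝ → ℝ := fun t => (1 / (m:ℝ)) * ∑ i,
      ((θ₀ i + t * d i) * Real.log (θ₀ i + t * d i)
        + (1 - (θ₀ i + t * d i)) * Real.log (1 - (θ₀ i + t * d i))) with hf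
  set c : ℝ := (1 / (m:ℝ)) * ∑ i, (Real.log (θ₀ i) - Real.log (1 - θ₀ i)) * d i with hc
  -- derivative of f at 0
  have hF : HasDerivAt f c 0 := by
    have per : ∀ i : Fin m, HasDerivAt (fun t =>
        (θ₀ i + t * d i) * Real.log (θ₀ i + t * d i)
          + (1 - (θ₀ i + t * d i)) * Real.log (1 - (θ₀ i + t * d i)))
        ((Real.log (θ₀ i) - Real.log (1 - θ₀ i)) * d i) 0 := by
      intro i
      have inner : HasDerivAt (fun t : ℝ => θ₀ i + t * d i) (d i) 0 := by
        simpa using ((hasDerivAt_id (0:ℝ)).mul_const (d i)).const_add (θ₀ i)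
      have outer : HasDerivAt (fun u => u * Real.log u + (1 - u) * Real.log (1 - u))
          (Real.log (θ₀ i) - Real.log (1 - θ₀ i)) (θ₀ i + 0 * d i) := by
        rw [show θ₀ i + 0 * d i = θ₀ i by ring]
        exact hasDerivAt_ent' (h0c i).1 (h0c i).2
      have := outer.comp 0 inner
      simpa [Function.comp_def] using this
    have hsum : HasDerivAt (fun t => ∑ i : Fin m,
        ((θ₀ i + t * d i) * Real.log (θ₀ i + t * d i)
          + (1 - (θ₀ i + t * d i)) * Real.log (1 - (θ₀ i + t * d i))))
        (∑ i : Fin m, (Real.log (θ₀ i) - Real.log (1 - θ₀ i)) * d i) 0 :=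
      HasDerivAt.fun_sum (fun i _ => per i)
    exact hsum.const_mul (1 / (m:ℝ))
  -- choose ε
  set δ : ℝ := Finset.univ.inf' Finset.univ_nonempty (fun i => min (θ₀ i) (1 - θ₀ i)) with hδdef
  have hδ : 0 < δ := by
    rw [hδdef, Finset.lt_inf'_iff]
    intro i _
    exact lt_min (h0c i).1 (by linarith [(h0c i).2])
  set M : ℝ := Finset.univ.sup' Finset.univ_nonempty (fun i => |d i|) with hMdef
  have hM : 0 ≤ M := le_trans (abs_nonneg (d (Classical.arbitrary (Fin m))))
    (Finset.le_sup' (fun i => |d i|) (Finset.mem_univ (Classical.arbitrary (Fin m))))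
  set ε : ℝ := min (δ / (M + 1)) 1 with hε
  have hε0 : 0 < ε := lt_min (by positivity) one_pos
  -- feasibility of θ₀ + t d for t ∈ Ioc 0 ε
  have hfeas : ∀ t ∈ Ioc (0:ℝ) ε, (fun i => θ₀ i + t * d i) ∈ Feas m p X b lam₀ := by
    intro t ht
    have ht0 : 0 < t := ht.1
    have ht1 : t ≤ 1 := le_trans ht.2 (min_le_right _ _)
    have htδ : t ≤ δ / (M + 1) := le_trans ht.2 (min_le_left _ _)
    have hcomp : ∀ i, t * |d i| < δ := by
      intro i
      have h1 : |d i| ≤ M := Finset.le_sup' (fun i => |d i|) (Finset.mem_univ i)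
      have h2 : t * |d i| ≤ (δ / (M + 1)) * M := by
        apply mul_le_mul htδ h1 (abs_nonneg _) (by positivity)
      have h3 : (δ / (M + 1)) * M < δ := by
        rw [div_mul_eq_mul_div, div_lt_iff₀ (by positivity)]
        nlinarith
      linarith
    have expand : ∀ v : Fin m → ℝ, ∑ i, (θ₀ i + t * d i) * v i
        = (1 - t * r) * ∑ i, θ₀ i * v i + t * ∑ i, θs i * v i := by
      intro v
      rw [Finset.mul_sum, Finset.mul_sum, ← Finset.sum_add_distrib]
      apply Finset.sum_congr rfl
      intro i _
      simp only [hd]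
      ring
    refine ⟨?_, ?_, ?_⟩
    · intro i
      have h1 := hcomp i
      have h2 : -|d i| ≤ d i := neg_abs_le _
      have h3 : d i ≤ |d i| := le_abs_self _
      have h4 : δ ≤ θ₀ i := le_trans (Finset.inf'_le _ (Finset.mem_univ i)) (min_le_left _ _)
      have h5 : δ ≤ 1 - θ₀ i := le_trans (Finset.inf'_le _ (Finset.mem_univ i)) (min_le_right _ _)
      have e2 : t * d i ≤ t * |d i| := mul_le_mul_of_nonneg_left h3 ht0.le
      have e3 : t * (-|d i|) ≤ t * d i := mul_le_mul_of_nonneg_left h2 ht0.le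
      have e4 : t * (-|d i|) = -(t * |d i|) := by ring
      constructor
      · show 0 < θ₀ i + t * d i
        linarith
      · show θ₀ i + t * d i < 1
        linarith
    · intro j
      rw [expand (X j)]
      have htr : 0 ≤ 1 - t * r := by nlinarith
      calc |(1 - t * r) * ∑ i, θ₀ i * X j i + t * ∑ i, θs i * X j i|
          ≤ |(1 - t * r) * ∑ i, θ₀ i * X j i| + |t * ∑ i, θs i * X j i| := abs_add_le _ _
        _ = (1 - t * r) * |∑ i, θ₀ i * X j i| + t * |∑ i, θs i * X j i| := by
            rw [abs_mul, abs_mul, abs_of_nonneg htr, abs_of_pos ht0]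
        _ ≤ (1 - t * r) * ((m:ℝ) * lam₀) + t * ((m:ℝ) * lam) :=
            add_le_add (mul_le_mul_of_nonneg_left (h0X j) htr)
              (mul_le_mul_of_nonneg_left (hsX j) ht0.le)
        _ = (m:ℝ) * lam₀ := by rw [← hrl]; ring
    · rw [expand b, h0b, hsb]; ring
  -- local min: f t ≥ f 0 on Ioc 0 ε
  have hmin : ∀ t ∈ Ioc (0:ℝ) ε, f 0 ≤ f t := by
    intro t ht
    have h1 := h0min _ (hfeas t ht)
    have hf0 : f 0 = g m θ₀ := by
      simp [hf, g]
    have hft : f t = g m (fun i => θ₀ i + t * d i) := rfl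
    rw [hf0, hft]
    exact h1
  -- conclude 0 ≤ c
  have hc0 : 0 ≤ c := by
    have hslope : Tendsto (slope f 0) (nhdsWithin 0 (Ioi 0)) (nhds c) :=
      (hasDerivAt_iff_tendsto_slope.1 hF).mono_left
        (nhdsWithin_mono 0 (fun x hx => ne_of_gt hx))
    apply ge_of_tendsto hslope
    filter_upwards [Ioc_mem_nhdsGT_of_mem ⟨le_refl 0, hε0⟩] with t ht
    rw [slope_def_field]
    have := hmin t ht
    have ht0 : 0 < t := ht.1
    apply div_nonneg (by linarith) (by linarith)
  -- rewrite c
  have hceq : c = (∑ i, gradg m θ₀ i * θs i) - r * ∑ i, gradg m θ₀ i * θ₀ i := by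
    rw [hc, Finset.mul_sum, Finset.mul_sum, ← Finset.sum_sub_distrib]
    apply Finset.sum_congr rfl
    intro i _
    simp only [hd, gradg]
    rw [Real.log_div (ne_of_gt (h0c i).1) (by linarith [(h0c i).2] : 1 - θ₀ i ≠ 0)]
    ring
  rw [hceq] at hc0
  linarith


/-- Theorem 2(a): for `λ_max ≥ λ₀ > λ > 0`,
`‖θ*_λ − θ*_{λ₀}‖₂² ≤ (m/2)[g((λ/λ₀)θ*_{λ₀}) − g(θ*_{λ₀}) + (1 − λ/λ₀)⟨∇g(θ*_{λ₀}), θ*_{λ₀}⟩]`. -/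
theorem slores_ball_bound (m p : ℕ) (hm : 1 ≤ m) (hp : 1 ≤ p)
    (X : Fin p → Fin m → ℝ) (b : Fin m → ℝ) (hb : ∀ i, b i = 1 ∨ b i = -1)
    (hmp : 1 ≤ mPlus m b) (hmm : 1 ≤ mMinus m b) (hlmax : 0 < lamMax m p X b)
    (lam lam₀ : ℝ) (hlam : 0 < lam) (hll : lam < lam₀) (hle : lam₀ ≤ lamMax m p X b)
    (θs θ₀ : Fin m → ℝ)
    (hθs : θs ∈ Feas m p X b lam ∧ ∀ θ ∈ Feas m p X b lam, g m θs ≤ g m θ)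
    (hθ₀ : θ₀ ∈ Feas m p X b lam₀ ∧ ∀ θ ∈ Feas m p X b lam₀, g m θ₀ ≤ g m θ) :
    ∑ i, (θs i - θ₀ i) ^ 2 ≤ ((m : ℝ) / 2) *
      (g m (fun i => (lam / lam₀) * θ₀ i) - g m θ₀
        + (1 - lam / lam₀) * ∑ i, gradg m θ₀ i * θ₀ i) := by
  obtain ⟨hsF, hsmin⟩ := hθs
  obtain ⟨h0F, h0min⟩ := hθ₀
  have hlam₀ : 0 < lam₀ := lt_trans hlam hll
  have hm0 : (0:ℝ) < m := by exact_mod_cast Nat.lt_of_lt_of_le Nat.zero_lt_one hm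
  set r : ℝ := lam / lam₀ with hr
  have hr0 : 0 < r := div_pos hlam hlam₀
  have hr1 : r < 1 := (div_lt_one hlam₀).2 hll
  have hrl : r * lam₀ = lam := div_mul_cancel₀ _ (ne_of_gt hlam₀)
  have hVI := VI hm hlam hll hsF h0F h0min
  obtain ⟨h0c, h0X, h0b⟩ := h0F
  obtain ⟨hsc, hsX, hsb⟩ := hsF
  -- the scaled point is feasible for lam
  have hscaled : (fun i => r * θ₀ i) ∈ Feas m p X b lam := by
    refine ⟨fun i => ⟨mul_pos hr0 (h0c i).1, ?_⟩, fun j => ?_, ?_⟩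
    · have := mul_lt_mul_of_pos_left (h0c i).2 hr0
      simpa using lt_trans this (by simpa using hr1)
    · have e : ∑ i, (r * θ₀ i) * X j i = r * ∑ i, θ₀ i * X j i := by
        rw [Finset.mul_sum]
        exact Finset.sum_congr rfl (fun i _ => by ring)
      rw [e, abs_mul, abs_of_pos hr0]
      calc r * |∑ i, θ₀ i * X j i| ≤ r * ((m:ℝ) * lam₀) :=
            mul_le_mul_of_nonneg_left (h0X j) hr0.le
        _ = (m:ℝ) * lam := by rw [← hrl]; ring
    · have e : ∑ i, (r * θ₀ i) * b i = r * ∑ i, θ₀ i * b i := by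
        rw [Finset.mul_sum]
        exact Finset.sum_congr rfl (fun i _ => by ring)
      rw [e, h0b, mul_zero]
  have hgs : g m θs ≤ g m (fun i => r * θ₀ i) := hsmin _ hscaled
  -- strong convexity (binary Pinsker) per coordinate
  have per : ∀ i : Fin m,
      θ₀ i * Real.log (θ₀ i) + (1 - θ₀ i) * Real.log (1 - θ₀ i)
        + Real.log (θ₀ i / (1 - θ₀ i)) * (θs i - θ₀ i) + 2 * (θs i - θ₀ i) ^ 2
      ≤ θs i * Real.log (θs i) + (1 - θs i) * Real.log (1 - θs i) := by
    intro i
    rw [Real.log_div (ne_of_gt (h0c i).1)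
      (by intro h; nlinarith [(h0c i).2] : (1:ℝ) - θ₀ i ≠ 0)]
    exact pinsker (h0c i).1 (h0c i).2 (hsc i).1 (hsc i).2
  have hsum := Finset.sum_le_sum (fun i (_ : i ∈ Finset.univ) => per i)
  rw [Finset.sum_add_distrib, Finset.sum_add_distrib, ← Finset.mul_sum] at hsum
  -- abbreviations
  set L : Fin m → ℝ := fun i => Real.log (θ₀ i / (1 - θ₀ i)) with hL
  set S0 : ℝ := ∑ i, (θ₀ i * Real.log (θ₀ i) + (1 - θ₀ i) * Real.log (1 - θ₀ i)) with hS0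
  set Ss : ℝ := ∑ i, (θs i * Real.log (θs i) + (1 - θs i) * Real.log (1 - θs i)) with hSs
  set SL0 : ℝ := ∑ i, L i * θ₀ i with hSL0
  set SLs : ℝ := ∑ i, L i * θs i with hSLs
  set Q : ℝ := ∑ i, (θs i - θ₀ i) ^ 2 with hQ
  set Gr : ℝ := g m (fun i => r * θ₀ i) with hGr
  have hsplit : ∑ i, L i * (θs i - θ₀ i) = SLs - SL0 := by
    rw [hSLs, hSL0, ← Finset.sum_sub_distrib]
    exact Finset.sum_congr rfl (fun i _ => by ring)
  rw [hsplit] at hsum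
  -- hsum : S0 + (SLs - SL0) + 2 * Q ≤ Ss
  have c0 : ∑ i, gradg m θ₀ i * θ₀ i = (1 / (m:ℝ)) * SL0 := by
    rw [hSL0, Finset.mul_sum]
    exact Finset.sum_congr rfl (fun i _ => by simp only [gradg, hL]; ring)
  have cs : ∑ i, gradg m θ₀ i * θs i = (1 / (m:ℝ)) * SLs := by
    rw [hSLs, Finset.mul_sum]
    exact Finset.sum_congr rfl (fun i _ => by simp only [gradg, hL]; ring)
  rw [c0, cs] at hVI
  -- hVI : r * ((1/m) * SL0) ≤ (1/m) * SLs
  have e2 : r * SL0 ≤ SLs := by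
    have h := mul_le_mul_of_nonneg_left hVI hm0.le
    have l1 : (m:ℝ) * (r * (1/(m:ℝ) * SL0)) = r * SL0 := by field_simp
    have l2 : (m:ℝ) * (1/(m:ℝ) * SLs) = SLs := by field_simp
    rw [l1, l2] at h
    exact h
  have hg0 : g m θ₀ = (1 / (m:ℝ)) * S0 := rfl
  have hgss : g m θs = (1 / (m:ℝ)) * Ss := rfl
  have e1 : Ss ≤ (m:ℝ) * Gr := by
    rw [hgss] at hgs
    have := mul_le_mul_of_nonneg_left hgs hm0.le
    rw [show (m:ℝ) * ((1/(m:ℝ)) * Ss) = Ss by field_simp] at this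
    exact this
  rw [c0, hg0]
  have key : (((m:ℝ)) / 2) * (Gr - (1/(m:ℝ)) * S0 + (1 - r) * ((1/(m:ℝ)) * SL0))
      = (1/2) * ((m:ℝ) * Gr - S0 + (1 - r) * SL0) := by
    field_simp
  rw [key]
  linarith
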